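/- Let T > 0 and 0 < α < β ≤ 1. There exists a constant C = C(α,β,T) > 0 such that for every positive integer N with δ = T/N ≤ 1 and every t ∈ [0,T], one has ∫_0^t ∫_0^{t_r} (t_r − t_u)^β (r−u)^{−α−1} du dr ≤ C. -/

import Mathlib

/-- The largest grid point `δ⌊u/δ⌋` of the uniform partition with mesh `δ` not exceeding `u`. -/
noncomputable def tgrid (δ u : ℝ) : ℝ := δ * (⌊u / δ⌋ : ℤ)

section Aux

open MeasureTheory intervalIntegral Set

lemma tgrid_le {δ : ℝ} (hδ : 0 < δ) (u : ℝ) : tgrid δ u ≤ u := by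
  have h := Int.floor_le (u / δ)
  have := mul_le_mul_of_nonneg_left h hδ.le
  rwa [mul_div_cancel₀ _ hδ.ne'] at this

lemma lt_tgrid_add {δ : ℝ} (hδ : 0 < δ) (u : ℝ) : u < tgrid δ u + δ := by
  have h := Int.lt_floor_add_one (u / δ)
  have := mul_lt_mul_of_pos_left h hδ
  rw [mul_div_cancel₀ _ hδ.ne'] at this
  unfold tgrid; linarith [this]

lemma tgrid_nonneg {δ : ℝ} (hδ : 0 < δ) {u : ℝ} (hu : 0 ≤ u) : 0 ≤ tgrid δ u := by
  have : (0:ℤ) ≤ ⌊u / δ⌋ := Int.floor_nonneg.2 (div_nonneg hu hδ.le)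
  unfold tgrid
  positivity

lemma tgrid_mono {δ : ℝ} (hδ : 0 < δ) {u v : ℝ} (h : u ≤ v) : tgrid δ u ≤ tgrid δ v := by
  unfold tgrid
  have : ⌊u / δ⌋ ≤ ⌊v / δ⌋ := Int.floor_le_floor (by gcongr)
  exact mul_le_mul_of_nonneg_left (by exact_mod_cast this) hδ.le

lemma tgrid_idem {δ : ℝ} (hδ : 0 < δ) (u : ℝ) : tgrid δ (tgrid δ u) = tgrid δ u := by
  unfold tgrid
  rw [mul_div_cancel_left₀ _ hδ.ne', Int.floor_intCast]

lemma tgrid_eq_of_mem {δ : ℝ} (hδ : 0 < δ) {k : ℤ} {r : ℝ}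
    (h1 : δ * k ≤ r) (h2 : r < δ * (k + 1)) : tgrid δ r = δ * k := by
  unfold tgrid
  congr 2
  rw [Int.floor_eq_iff]
  constructor
  · rw [le_div_iff₀ hδ]; linarith
  · rw [div_lt_iff₀ hδ]; linarith

lemma rpow_add_le_add_rpow' {a b p : ℝ} (ha : 0 ≤ a) (hb : 0 ≤ b) (hp : 0 ≤ p) (hp1 : p ≤ 1) :
    (a + b) ^ p ≤ a ^ p + b ^ p := by
  have h := NNReal.rpow_add_le_add_rpow a.toNNReal b.toNNReal hp hp1
  have h2 := (NNReal.coe_le_coe).2 h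
  rw [NNReal.coe_rpow, NNReal.coe_add, NNReal.coe_add, NNReal.coe_rpow, NNReal.coe_rpow,
    Real.coe_toNNReal _ ha, Real.coe_toNNReal _ hb] at h2
  exact h2

lemma inner_bound {α β T δ r : ℝ} (hα0 : 0 < α) (hαβ : α < β) (hβ1 : β ≤ 1)
    (hδ : 0 < δ) (hr0 : 0 ≤ r) (hrT : r ≤ T) (hs : tgrid δ r < r) :
    (∫ u in (0:ℝ)..tgrid δ r, (tgrid δ r - tgrid δ u) ^ β * (r - u) ^ (-α - 1))
      ≤ T ^ (β - α) / (β - α) + δ ^ β * (r - tgrid δ r) ^ (-α) / α := by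
  set s := tgrid δ r with hsdef
  have hs0 : 0 ≤ s := tgrid_nonneg hδ hr0
  have hrs : 0 < r - s := by linarith
  have hβ0 : 0 < β := hα0.trans hαβ
  have hc1 : IntervalIntegrable (fun u => (r - u) ^ (β - α - 1)) volume 0 s := by
    apply ContinuousOn.intervalIntegrable
    apply ContinuousOn.rpow_const (by fun_prop)
    intro x hx
    rw [uIcc_of_le hs0] at hx
    exact Or.inl (by nlinarith [hx.2] : r - x ≠ 0)
  have hc2 : IntervalIntegrable (fun u => (r - u) ^ (-α - 1)) volume 0 s := by
    apply ContinuousOn.intervalIntegrable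
    apply ContinuousOn.rpow_const (by fun_prop)
    intro x hx
    rw [uIcc_of_le hs0] at hx
    exact Or.inl (by nlinarith [hx.2] : r - x ≠ 0)
  have hφint : IntervalIntegrable
      (fun u => (r - u) ^ (β - α - 1) + δ ^ β * (r - u) ^ (-α - 1)) volume 0 s :=
    hc1.add (hc2.const_mul _)
  have hbound : ∀ u ∈ Ioc (0:ℝ) s,
      (s - tgrid δ u) ^ β * (r - u) ^ (-α - 1)
        ≤ (r - u) ^ (β - α - 1) + δ ^ β * (r - u) ^ (-α - 1) := by
    intro u hu
    have htu_le : tgrid δ u ≤ u := tgrid_le hδ u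
    have htu_le_s : tgrid δ u ≤ s := by
      have := tgrid_mono hδ hu.2
      rwa [hsdef, tgrid_idem hδ] at this
    have hru : 0 < r - u := by linarith [hu.2]
    have h1 : s - tgrid δ u ≤ (r - u) + δ := by
      have := lt_tgrid_add hδ u
      linarith [hs.le]
    have h2 : (s - tgrid δ u) ^ β ≤ ((r - u) + δ) ^ β :=
      Real.rpow_le_rpow (by linarith) h1 hβ0.le
    have h3 : ((r - u) + δ) ^ β ≤ (r - u) ^ β + δ ^ β :=
      rpow_add_le_add_rpow' hru.le hδ.le hβ0.le hβ1
    have h4 : (0:ℝ) ≤ (r - u) ^ (-α - 1) := Real.rpow_nonneg hru.le _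
    calc (s - tgrid δ u) ^ β * (r - u) ^ (-α - 1)
        ≤ ((r - u) ^ β + δ ^ β) * (r - u) ^ (-α - 1) :=
          mul_le_mul_of_nonneg_right (h2.trans h3) h4
      _ = (r - u) ^ (β - α - 1) + δ ^ β * (r - u) ^ (-α - 1) := by
          rw [add_mul, ← Real.rpow_add hru]
          ring_nf
  have hmono : (∫ u in (0:ℝ)..s, (s - tgrid δ u) ^ β * (r - u) ^ (-α - 1))
      ≤ ∫ u in (0:ℝ)..s, ((r - u) ^ (β - α - 1) + δ ^ β * (r - u) ^ (-α - 1)) := by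
    rw [integral_of_le hs0, integral_of_le hs0]
    apply MeasureTheory.integral_mono_of_nonneg
    · refine (ae_restrict_iff' measurableSet_Ioc).2 (ae_of_all _ fun u hu => ?_)
      have htu_le_s : tgrid δ u ≤ s := by
        have := tgrid_mono hδ hu.2
        rwa [hsdef, tgrid_idem hδ] at this
      exact mul_nonneg (Real.rpow_nonneg (by linarith) _)
        (Real.rpow_nonneg (by linarith [hu.2, hs.le]) _)
    · exact (intervalIntegrable_iff_integrableOn_Ioc_of_le hs0).1 hφint
    · exact (ae_restrict_iff' measurableSet_Ioc).2 (ae_of_all _ hbound)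
  have hsplit : (∫ u in (0:ℝ)..s, ((r - u) ^ (β - α - 1) + δ ^ β * (r - u) ^ (-α - 1)))
      = (∫ u in (0:ℝ)..s, (r - u) ^ (β - α - 1))
        + δ ^ β * ∫ u in (0:ℝ)..s, (r - u) ^ (-α - 1) := by
    rw [integral_add hc1 (hc2.const_mul _), intervalIntegral.integral_const_mul]
  have hI1 : (∫ u in (0:ℝ)..s, (r - u) ^ (β - α - 1)) ≤ T ^ (β - α) / (β - α) := by
    have he : (∫ u in (0:ℝ)..s, (r - u) ^ (β - α - 1))
        = ∫ x in (r - s)..(r - 0), x ^ (β - α - 1) :=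
      integral_comp_sub_left (fun x => x ^ (β - α - 1)) r
    rw [he, sub_zero, integral_rpow (Or.inl (by linarith))]
    have h1 : β - α - 1 + 1 = β - α := by ring
    rw [h1]
    have hr_le : r ^ (β - α) ≤ T ^ (β - α) :=
      Real.rpow_le_rpow hr0 hrT (by linarith)
    have hnn : (0:ℝ) ≤ (r - s) ^ (β - α) := Real.rpow_nonneg hrs.le _
    apply div_le_div_of_nonneg_right ?_ (by linarith) |>.trans_eq rfl
    · linarith
  have hI2 : (∫ u in (0:ℝ)..s, (r - u) ^ (-α - 1)) ≤ (r - s) ^ (-α) / α := by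
    have he : (∫ u in (0:ℝ)..s, (r - u) ^ (-α - 1))
        = ∫ x in (r - s)..(r - 0), x ^ (-α - 1) :=
      integral_comp_sub_left (fun x => x ^ (-α - 1)) r
    have h0 : (0:ℝ) ∉ uIcc (r - s) r := by
      rw [uIcc_of_le (by linarith)]
      intro h
      exact absurd h.1 (by linarith)
    have hval : (∫ x in (r - s)..r, x ^ (-α - 1))
        = (r ^ (-α - 1 + 1) - (r - s) ^ (-α - 1 + 1)) / (-α - 1 + 1) :=
      integral_rpow (Or.inr ⟨by intro h; linarith, h0⟩)
    have h1 : -α - 1 + 1 = -α := by ring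
    rw [h1] at hval
    rw [he, sub_zero, hval]
    have hnn : (0:ℝ) ≤ r ^ (-α) := Real.rpow_nonneg hr0 _
    rw [div_neg, ← neg_div, neg_sub]
    gcongr
    exact sub_le_self _ hnn
  calc (∫ u in (0:ℝ)..s, (s - tgrid δ u) ^ β * (r - u) ^ (-α - 1))
      ≤ _ := hmono
    _ = _ := hsplit
    _ ≤ T ^ (β - α) / (β - α) + δ ^ β * ((r - s) ^ (-α) / α) := by
        gcongr
    _ = T ^ (β - α) / (β - α) + δ ^ β * (r - s) ^ (-α) / α := by ring

lemma step_ae {α δ : ℝ} (hδ : 0 < δ) (k : ℕ) :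
    ∀ᵐ x ∂(volume : Measure ℝ), x ∈ uIoc ((k:ℝ)*δ) (((k:ℝ)+1)*δ) →
      (x - tgrid δ x) ^ (-α) = (x - (k:ℝ)*δ) ^ (-α) := by
  have hne : {(((k:ℝ)+1)*δ)}ᶜ ∈ ae (volume : Measure ℝ) :=
    compl_mem_ae_iff.2 (measure_singleton _)
  filter_upwards [hne] with x hx hmem
  rw [uIoc_of_le (by nlinarith [hδ.le] : (k:ℝ)*δ ≤ ((k:ℝ)+1)*δ)] at hmem
  have hxlt : x < ((k:ℝ)+1)*δ := lt_of_le_of_ne hmem.2 hx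
  have : tgrid δ x = δ * (k:ℤ) := tgrid_eq_of_mem hδ
    (by push_cast; linarith [hmem.1.le]) (by push_cast; linarith)
  rw [this]
  push_cast
  ring_nf

lemma F_piece {α δ : ℝ} (hα1 : α < 1) (hδ : 0 < δ) (k : ℕ) :
    IntervalIntegrable (fun r => (r - tgrid δ r) ^ (-α)) volume ((k:ℝ)*δ) (((k:ℝ)+1)*δ) ∧
    (∫ r in ((k:ℝ)*δ)..(((k:ℝ)+1)*δ), (r - tgrid δ r) ^ (-α)) = δ ^ (1-α) / (1-α) := by
  have hGint : IntervalIntegrable (fun x => (x - (k:ℝ)*δ) ^ (-α)) volume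
      ((k:ℝ)*δ) (((k:ℝ)+1)*δ) := by
    have h := (intervalIntegrable_rpow' (a := 0) (b := δ)
      (by linarith : (-1:ℝ) < -α)).comp_sub_right ((k:ℝ)*δ)
    have e1 : (0:ℝ) + (k:ℝ)*δ = (k:ℝ)*δ := by ring
    have e2 : δ + (k:ℝ)*δ = ((k:ℝ)+1)*δ := by ring
    rwa [e1, e2] at h
  have hae := step_ae (α := α) hδ k
  constructor
  · have h2 : (fun r => (r - tgrid δ r) ^ (-α))
        =ᶠ[ae ((volume : Measure ℝ).restrict (uIoc ((k:ℝ)*δ) (((k:ℝ)+1)*δ)))]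
        (fun x => (x - (k:ℝ)*δ) ^ (-α)) :=
      (ae_restrict_iff' measurableSet_uIoc).2 hae
    exact hGint.congr_ae h2.symm
  · rw [integral_congr_ae hae]
    have h := integral_comp_sub_right (a := (k:ℝ)*δ) (b := ((k:ℝ)+1)*δ)
      (fun x => x ^ (-α)) ((k:ℝ)*δ)
    have e1 : (k:ℝ)*δ - (k:ℝ)*δ = 0 := by ring
    have e2 : ((k:ℝ)+1)*δ - (k:ℝ)*δ = δ := by ring
    rw [e1, e2] at h
    rw [h, integral_rpow (Or.inl (by linarith : (-1:ℝ) < -α))]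
    rw [Real.zero_rpow (by linarith : -α + 1 ≠ 0)]
    rw [show -α + 1 = 1 - α by ring]
    ring

lemma F_props {α δ : ℝ} (hα1 : α < 1) (hδ : 0 < δ) (n : ℕ) :
    IntervalIntegrable (fun r => (r - tgrid δ r) ^ (-α)) volume 0 ((n:ℝ)*δ) ∧
    (∫ r in (0:ℝ)..((n:ℝ)*δ), (r - tgrid δ r) ^ (-α)) = (n:ℝ) * (δ ^ (1-α) / (1-α)) := by
  set a : ℕ → ℝ := fun k => (k:ℝ)*δ with ha
  have hint : ∀ k : ℕ, IntervalIntegrable (fun r => (r - tgrid δ r) ^ (-α))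
      volume (a k) (a (k+1)) := by
    intro k
    have h := (F_piece hα1 hδ k).1
    have e : a (k+1) = ((k:ℝ)+1)*δ := by simp [ha]
    rw [ha]
    simpa [e] using h
  have h0 : a 0 = 0 := by simp [ha]
  constructor
  · have h := IntervalIntegrable.trans_iterate (a := a) (n := n) (fun k _ => hint k)
    rwa [h0] at h
  · have h := sum_integral_adjacent_intervals (a := a) (n := n) (fun k _ => hint k)
    rw [h0] at h
    rw [show ((n:ℝ)*δ) = a n from rfl, ← h]
    have hval : ∀ k ∈ Finset.range n,
        (∫ r in (a k)..(a (k+1)), (r - tgrid δ r) ^ (-α)) = δ ^ (1-α) / (1-α) := by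
      intro k _
      have h2 := (F_piece (α := α) hα1 hδ k).2
      have e : a (k+1) = ((k:ℝ)+1)*δ := by simp [ha]
      rw [show a k = (k:ℝ)*δ from rfl, e]
      exact h2
    rw [Finset.sum_congr rfl hval, Finset.sum_const, Finset.card_range, nsmul_eq_mul]

end Aux

open MeasureTheory intervalIntegral Set in
/-- For `0 < α < β ≤ 1` there is `C = C(α,β,T)` such that for every partition with mesh
`δ = T/N ≤ 1` and every `t ∈ [0,T]`,
`∫_0^t ∫_0^{t_r} (t_r − t_u)^β (r−u)^{−α−1} du dr ≤ C`. -/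
theorem stmt_4 (α β T : ℝ) (hα0 : 0 < α) (hαβ : α < β) (hβ1 : β ≤ 1) (hT : 0 < T) :
    ∃ C : ℝ, 0 < C ∧ ∀ N : ℕ, 0 < N → T / N ≤ 1 →
      ∀ t ∈ Set.Icc (0:ℝ) T,
        (∫ r in (0:ℝ)..t, ∫ u in (0:ℝ)..tgrid (T / N) r,
            (tgrid (T / N) r - tgrid (T / N) u) ^ β * (r - u) ^ (-α - 1))
          ≤ C := by
  have hα1 : α < 1 := lt_of_lt_of_le hαβ hβ1
  have hβα : 0 < β - α := by linarith
  have h1α : 0 < 1 - α := by linarith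
  have hTpow : 0 < T ^ (β - α) := Real.rpow_pos_of_pos hT _
  refine ⟨T * (T ^ (β - α) / (β - α)) + T / (α * (1 - α)) + 1,
    add_pos (add_pos (mul_pos hT (div_pos hTpow hβα)) (div_pos hT (mul_pos hα0 h1α))) one_pos, ?_⟩
  intro N hN hδ1 t ht
  obtain ⟨ht0, htT⟩ := ht
  set δ := T / N with hδdef
  have hNpos : (0:ℝ) < (N:ℝ) := by exact_mod_cast hN
  have hδ : 0 < δ := div_pos hT hNpos
  have hNδ : (N:ℝ) * δ = T := by rw [hδdef, mul_div_cancel₀ _ hNpos.ne']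
  set K1 := T ^ (β - α) / (β - α) with hK1
  have hK1pos : 0 < K1 := by positivity
  obtain ⟨hFT, hFval⟩ := F_props (α := α) hα1 hδ N
  rw [hNδ] at hFT hFval
  have hFt : IntervalIntegrable (fun r => (r - tgrid δ r) ^ (-α)) volume 0 t := by
    apply hFT.mono_set
    rw [uIcc_of_le ht0, uIcc_of_le (le_trans ht0 htT)]
    exact Icc_subset_Icc le_rfl htT
  have hBint : IntervalIntegrable
      (fun r => K1 + (δ ^ β / α) * (r - tgrid δ r) ^ (-α)) volume 0 t :=
    intervalIntegrable_const.add (hFt.const_mul _)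
  have hgB : (∫ r in (0:ℝ)..t, ∫ u in (0:ℝ)..tgrid δ r,
        (tgrid δ r - tgrid δ u) ^ β * (r - u) ^ (-α - 1))
      ≤ ∫ r in (0:ℝ)..t, (K1 + (δ ^ β / α) * (r - tgrid δ r) ^ (-α)) := by
    rw [integral_of_le ht0, integral_of_le ht0]
    apply MeasureTheory.integral_mono_of_nonneg
    · refine (ae_restrict_iff' measurableSet_Ioc).2 (ae_of_all _ fun r hr => ?_)
      apply intervalIntegral.integral_nonneg (tgrid_nonneg hδ hr.1.le)
      intro u hu
      have h1 : tgrid δ u ≤ tgrid δ r := by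
        have := tgrid_mono hδ hu.2
        rwa [tgrid_idem hδ] at this
      have h2 : u ≤ r := le_trans hu.2 (tgrid_le hδ r)
      exact mul_nonneg (Real.rpow_nonneg (by linarith) _) (Real.rpow_nonneg (by linarith) _)
    · exact (intervalIntegrable_iff_integrableOn_Ioc_of_le ht0).1 hBint
    · have hnull : (volume : Measure ℝ) {r : ℝ | tgrid δ r = r} = 0 := by
        have hsub : {r : ℝ | tgrid δ r = r} ⊆ Set.range (fun k : ℤ => δ * (k:ℝ)) :=
          fun r hr => ⟨⌊r/δ⌋, hr⟩
        exact measure_mono_null hsub ((Set.countable_range _).measure_zero _)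
      have h1 : ∀ᵐ r ∂(volume : Measure ℝ), tgrid δ r ≠ r := by
        rw [ae_iff]
        simpa [not_not] using hnull
      filter_upwards [ae_restrict_of_ae h1, ae_restrict_mem measurableSet_Ioc] with r hne hr
      have hib := inner_bound hα0 hαβ hβ1 hδ hr.1.le (hr.2.trans htT)
        (lt_of_le_of_ne (tgrid_le hδ r) hne)
      have heq : δ ^ β * (r - tgrid δ r) ^ (-α) / α
          = (δ ^ β / α) * (r - tgrid δ r) ^ (-α) := by ring
      rw [heq] at hib
      exact hib
  have hBeq : (∫ r in (0:ℝ)..t, (K1 + (δ ^ β / α) * (r - tgrid δ r) ^ (-α)))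
      = K1 * t + (δ ^ β / α) * ∫ r in (0:ℝ)..t, (r - tgrid δ r) ^ (-α) := by
    rw [integral_add intervalIntegrable_const (hFt.const_mul _), intervalIntegral.integral_const_mul,
      intervalIntegral.integral_const]
    simp [smul_eq_mul]
    ring
  have hFmono : (∫ r in (0:ℝ)..t, (r - tgrid δ r) ^ (-α))
      ≤ ∫ r in (0:ℝ)..T, (r - tgrid δ r) ^ (-α) := by
    apply integral_mono_interval le_rfl ht0 htT ?_ hFT
    refine ae_of_all _ fun r => ?_
    exact Real.rpow_nonneg (sub_nonneg.2 (tgrid_le hδ r)) _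
  have hpow : δ ^ β * δ ^ (1 - α) = δ * δ ^ (β - α) := by
    rw [← Real.rpow_add hδ, show β + (1 - α) = 1 + (β - α) by ring,
      Real.rpow_add hδ, Real.rpow_one]
  have hδpow : δ ^ (β - α) ≤ 1 := Real.rpow_le_one hδ.le hδ1 hβα.le
  have key : (δ ^ β / α) * ((N:ℝ) * (δ ^ (1-α) / (1-α)))
      = ((N:ℝ) * δ) * δ ^ (β - α) / (α * (1 - α)) := by
    rw [mul_assoc, ← hpow, div_eq_mul_inv, div_eq_mul_inv, div_eq_mul_inv, mul_inv]
    ring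
  have hfinal : K1 * t + (δ ^ β / α) * ∫ r in (0:ℝ)..t, (r - tgrid δ r) ^ (-α)
      ≤ T * K1 + T / (α * (1 - α)) := by
    have h2 : (δ ^ β / α) * ∫ r in (0:ℝ)..t, (r - tgrid δ r) ^ (-α)
        ≤ (δ ^ β / α) * ∫ r in (0:ℝ)..T, (r - tgrid δ r) ^ (-α) := by
      apply mul_le_mul_of_nonneg_left hFmono
      positivity
    have h3 : (δ ^ β / α) * ∫ r in (0:ℝ)..T, (r - tgrid δ r) ^ (-α)
        = T * δ ^ (β - α) / (α * (1 - α)) := by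
      rw [hFval, key, hNδ]
    have h4 : T * δ ^ (β - α) / (α * (1 - α)) ≤ T / (α * (1 - α)) := by
      apply div_le_div_of_nonneg_right ?_ (mul_pos hα0 h1α).le |>.trans_eq rfl
      nlinarith [hδpow]
    have h5 : K1 * t ≤ T * K1 := by nlinarith [hK1pos.le]
    linarith [h2, h3 ▸ h4]
  calc (∫ r in (0:ℝ)..t, ∫ u in (0:ℝ)..tgrid δ r,
        (tgrid δ r - tgrid δ u) ^ β * (r - u) ^ (-α - 1))
      ≤ _ := hgB
    _ = _ := hBeq
    _ ≤ T * K1 + T / (α * (1 - α)) := hfinal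
    _ ≤ T * (T ^ (β - α) / (β - α)) + T / (α * (1 - α)) + 1 := by
        rw [hK1]; linarith
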